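/- For every odd integer r ≥ 3, every ε ∈ (0,1), every d ∈ [0,1], and every graph G on n vertices with n ≥ 2/(ε - ε²): if G is (ε,d)-dense (i.e., every vertex subset X with |X| ≥ εn spans at least (d/2)|X|² edges), then the number of closed walks of length r in G (sequences (x₁,...,x_r) with x₁x₂, x₂x₃, ..., x_rx₁ all edges) is at least (d^r - ε)·n^r. -/

import Mathlib

open Finset
open scoped Classical

set_option linter.unusedSectionVars false
set_option maxHeartbeats 2000000

/-- Number of edges of `G` spanned by the vertex set `X`. -/
noncomputable def edgesIn {V : Type*} [Fintype V] (G : SimpleGraph V) (X : Finset V) : ℕ :=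
  (G.edgeFinset.filter (fun e => ∀ v ∈ e, v ∈ X)).card

/-- `G` is `(ε, d)`-dense: every vertex set `X` with `|X| ≥ ε n` spans at least
`(d/2)|X|²` edges. -/
def IsEpsDense {V : Type*} [Fintype V] (G : SimpleGraph V) (ε d : ℝ) : Prop :=
  ∀ X : Finset V, ε * (Fintype.card V : ℝ) ≤ (X.card : ℝ) →
    d / 2 * (X.card : ℝ) ^ 2 ≤ (edgesIn G X : ℝ)

/-- The number of closed walks of length `r` in `G`, i.e. of sequences
`(x₁, …, x_r)` with all consecutive pairs (cyclically) adjacent. -/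
noncomputable def closedWalkCount {V : Type*} [Fintype V] (G : SimpleGraph V) (r : ℕ) : ℕ :=
  (Finset.univ.filter (fun x : Fin r → V => ∀ i, G.Adj (x i) (x (finRotate r i)))).card

/-- The number of walks of length `m` from `x` to `y` in `G`. -/
noncomputable def walkCount {V : Type*} [Fintype V] (G : SimpleGraph V) (m : ℕ) (x y : V) : ℕ :=
  (Finset.univ.filter (fun a : Fin (m + 1) → V =>
    a 0 = x ∧ a (Fin.last m) = y ∧ ∀ i : Fin m, G.Adj (a i.castSucc) (a i.succ))).card

/-- The number of homomorphisms from the path with `k` edges into `G`. -/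
noncomputable def pathHomCount {V : Type*} [Fintype V] (G : SimpleGraph V) (k : ℕ) : ℕ :=
  (Finset.univ.filter (fun a : Fin (k + 1) → V =>
    ∀ i : Fin k, G.Adj (a i.castSucc) (a i.succ))).card

/-- `∑_{xy ∈ E(G)} f(x) f(y)`, summed over unordered edges. -/
noncomputable def edgeSum {V : Type*} [Fintype V] (G : SimpleGraph V) (f : V → ℝ) : ℝ :=
  ∑ e ∈ G.edgeFinset, Sym2.lift ⟨fun x y => f x * f y, fun x y => mul_comm _ _⟩ e


namespace OCA
variable {V : Type*} [Fintype V] (G : SimpleGraph V)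

lemma walkCount_zero (x y : V) : walkCount G 0 x y = if x = y then 1 else 0 := by
  unfold walkCount
  rcases eq_or_ne x y with h | h
  · subst h
    rw [if_pos rfl]
    rw [Finset.card_eq_one]
    refine ⟨fun _ => x, ?_⟩
    ext f
    simp only [mem_filter, mem_univ, true_and, mem_singleton]
    constructor
    · rintro ⟨h1, h2, -⟩
      funext i
      have : i = 0 := by ext; omega
      rw [this, h1]
    · rintro rfl
      exact ⟨rfl, rfl, fun i => i.elim0⟩
  · rw [if_neg h, Finset.card_eq_zero]
    rw [Finset.filter_eq_empty_iff]
    rintro f -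
    rintro statement
    obtain ⟨h1, h2, -⟩ := statement
    exact h (by rw [← h1, ← h2]; rfl)

lemma walkCount_succ (k : ℕ) (x y : V) :
    walkCount G (k + 1) x y =
      ∑ z, (if G.Adj x z then walkCount G k z y else 0) := by
  classical
  have key : walkCount G (k + 1) x y =
      (Finset.univ.filter (fun g : Fin (k + 1) → V =>
        (g (Fin.last k) = y ∧ ∀ i : Fin k, G.Adj (g i.castSucc) (g i.succ)) ∧
          G.Adj x (g 0))).card := by
    unfold walkCount
    apply Finset.card_bij' (fun f _ => f ∘ Fin.succ) (fun g _ => Fin.cases x g)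
    · intro f hf
      simp only [mem_filter, mem_univ, true_and] at hf ⊢
      obtain ⟨h0, hl, hp⟩ := hf
      refine ⟨⟨?_, ?_⟩, ?_⟩
      · show f ((Fin.last k).succ) = y
        rw [Fin.succ_last]; exact hl
      · intro i
        have := hp i.succ
        rwa [← Fin.succ_castSucc] at this
      · show G.Adj x (f (Fin.succ 0))
        have := hp 0
        rwa [Fin.castSucc_zero, h0] at this
    · intro g hg
      simp only [mem_filter, mem_univ, true_and] at hg ⊢
      obtain ⟨⟨hl, hp⟩, h0⟩ := hg
      refine ⟨by simp, ?_, ?_⟩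
      · show (Fin.cases x g : Fin (k+1+1) → V) (Fin.last (k+1)) = y
        rw [← Fin.succ_last]
        simp only [Fin.cases_succ]
        exact hl
      · intro i
        induction i using Fin.cases with
        | zero =>
          simp only [Fin.castSucc_zero, Fin.cases_zero, Fin.cases_succ]
          exact h0
        | succ j =>
          rw [← Fin.succ_castSucc, Fin.cases_succ, Fin.cases_succ]
          exact hp j
    · intro f hf
      simp only [mem_filter, mem_univ, true_and] at hf
      funext i
      induction i using Fin.cases with
      | zero => simpa using hf.1.symm
      | succ j => simp
    · intro g hg
      funext i
      simp
  rw [key]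
  rw [Finset.card_eq_sum_card_fiberwise (f := fun g : Fin (k+1) → V => g 0)
    (t := Finset.univ) (fun g _ => mem_univ _)]
  apply Finset.sum_congr rfl
  intro z _
  rcases em (G.Adj x z) with hxz | hxz
  · rw [if_pos hxz]
    unfold walkCount
    congr 1
    ext g
    simp only [mem_filter, mem_univ, true_and]
    constructor
    · rintro ⟨⟨⟨hl, hp⟩, hadj⟩, h0⟩
      exact ⟨h0, hl, hp⟩
    · rintro ⟨h0, hl, hp⟩
      exact ⟨⟨⟨hl, hp⟩, h0 ▸ hxz⟩, h0⟩
  · rw [if_neg hxz]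
    rw [Finset.card_eq_zero, Finset.filter_eq_empty_iff]
    rintro g hg h0
    rw [Finset.mem_filter] at hg
    exact hxz (h0 ▸ hg.2.2)

end OCA

section P2
open Finset
namespace OCA
variable {V : Type*} [Fintype V] (G : SimpleGraph V)

noncomputable def aR (u v : V) : ℝ := if G.Adj u v then 1 else 0

lemma aR_nonneg (u v : V) : 0 ≤ aR G u v := by unfold aR; split <;> norm_num
lemma aR_le_one (u v : V) : aR G u v ≤ 1 := by unfold aR; split <;> norm_num
lemma aR_comm (u v : V) : aR G u v = aR G v u := by unfold aR; rw [G.adj_comm]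
lemma aR_self (v : V) : aR G v v = 0 := by unfold aR; rw [if_neg (G.irrefl)]

noncomputable def wR (k : ℕ) (x y : V) : ℝ := (walkCount G k x y : ℝ)

lemma wR_nonneg (k : ℕ) (x y : V) : 0 ≤ wR G k x y := Nat.cast_nonneg _

lemma wR_zero (x y : V) : wR G 0 x y = if x = y then 1 else 0 := by
  unfold wR; rw [walkCount_zero]; split <;> norm_num

lemma wR_succ (k : ℕ) (x y : V) :
    wR G (k + 1) x y = ∑ z, aR G x z * wR G k z y := by
  unfold wR aR
  rw [walkCount_succ]
  push_cast
  apply Finset.sum_congr rfl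
  intro z _
  split <;> norm_num

lemma wR_add (j k : ℕ) (x y : V) :
    wR G (j + k) x y = ∑ z, wR G j x z * wR G k z y := by
  induction j generalizing x with
  | zero =>
    rw [Nat.zero_add]
    symm
    rw [Finset.sum_eq_single x]
    · rw [wR_zero, if_pos rfl, one_mul]
    · intro z _ hz
      rw [wR_zero, if_neg (Ne.symm hz), zero_mul]
    · intro h; exact absurd (mem_univ x) h
  | succ j IH =>
    have : j + 1 + k = (j + k) + 1 := by omega
    rw [this, wR_succ]
    have rhs : ∀ z, wR G (j+1) x z = ∑ w, aR G x w * wR G j w z := fun z => wR_succ G j x z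
    calc ∑ z, aR G x z * wR G (j + k) z y
        = ∑ z, aR G x z * ∑ w, wR G j z w * wR G k w y := by
          apply Finset.sum_congr rfl; intro z _; rw [IH]
      _ = ∑ z, ∑ w, aR G x z * (wR G j z w * wR G k w y) := by
          apply Finset.sum_congr rfl; intro z _; rw [Finset.mul_sum]
      _ = ∑ w, ∑ z, aR G x z * (wR G j z w * wR G k w y) := Finset.sum_comm
      _ = ∑ w, (∑ z, aR G x z * wR G j z w) * wR G k w y := by
          apply Finset.sum_congr rfl; intro w _
          rw [Finset.sum_mul]; apply Finset.sum_congr rfl; intro z _; ring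
      _ = ∑ w, wR G (j+1) x w * wR G k w y := by
          apply Finset.sum_congr rfl; intro w _; rw [rhs w]

lemma wR_one (x y : V) : wR G 1 x y = aR G x y := by
  rw [wR_succ]
  rw [Finset.sum_eq_single y]
  · rw [wR_zero, if_pos rfl, mul_one]
  · intro z _ hz; rw [wR_zero, if_neg hz, mul_zero]
  · intro h; exact absurd (mem_univ y) h

lemma wR_comm (k : ℕ) (x y : V) : wR G k x y = wR G k y x := by
  induction k generalizing x y with
  | zero => rw [wR_zero, wR_zero]; simp [eq_comm]
  | succ k IH =>
    rw [wR_succ]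
    have : k + 1 = k + 1 := rfl
    rw [show (k+1) = k+1 from rfl, wR_add G k 1 y x]
    apply Finset.sum_congr rfl
    intro z _
    rw [wR_one, aR_comm, IH z y]
    ring

end OCA
end P2

section P3
open Finset
namespace OCA
variable {V : Type*} [Fintype V] (G : SimpleGraph V)

noncomputable def FR (k : ℕ) (x : V) : ℝ := ∑ y, wR G k x y
noncomputable def WRR (k : ℕ) : ℝ := ∑ x, FR G k x

lemma FR_nonneg (k : ℕ) (x : V) : 0 ≤ FR G k x :=
  Finset.sum_nonneg fun y _ => wR_nonneg G k x y

lemma FR_succ (k : ℕ) (x : V) : FR G (k + 1) x = ∑ z, aR G x z * FR G k z := by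
  unfold FR
  calc ∑ y, wR G (k+1) x y = ∑ y, ∑ z, aR G x z * wR G k z y := by
        apply Finset.sum_congr rfl; intro y _; rw [wR_succ]
    _ = ∑ z, ∑ y, aR G x z * wR G k z y := Finset.sum_comm
    _ = ∑ z, aR G x z * ∑ y, wR G k z y := by
        apply Finset.sum_congr rfl; intro z _; rw [Finset.mul_sum]

lemma FR_le (k : ℕ) (x : V) : FR G k x ≤ (Fintype.card V : ℝ) ^ k := by
  induction k generalizing x with
  | zero =>
    unfold FR
    rw [pow_zero]
    rw [Finset.sum_eq_single x]
    · rw [wR_zero, if_pos rfl]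
    · intro y _ hy; rw [wR_zero, if_neg (Ne.symm hy)]
    · intro h; exact absurd (mem_univ x) h
  | succ k IH =>
    rw [FR_succ, pow_succ]
    calc ∑ z, aR G x z * FR G k z ≤ ∑ z : V, (Fintype.card V : ℝ) ^ k := by
          apply Finset.sum_le_sum
          intro z _
          have h1 := aR_nonneg G x z
          have h2 := aR_le_one G x z
          have h3 := FR_nonneg G k z
          nlinarith [IH z]
      _ = (Fintype.card V : ℝ) * (Fintype.card V : ℝ) ^ k := by
          rw [Finset.sum_const, Finset.card_univ]; simp [mul_comm]
      _ = (Fintype.card V : ℝ) ^ k * (Fintype.card V : ℝ) := by ring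

lemma wR_le (k : ℕ) (x y : V) : wR G (k + 1) x y ≤ (Fintype.card V : ℝ) ^ k := by
  induction k generalizing x y with
  | zero =>
    rw [wR_one, pow_zero]; exact aR_le_one G x y
  | succ k IH =>
    rw [wR_succ, pow_succ]
    calc ∑ z, aR G x z * wR G (k+1) z y ≤ ∑ z : V, (Fintype.card V : ℝ) ^ k := by
          apply Finset.sum_le_sum
          intro z _
          have h1 := aR_nonneg G x z
          have h2 := aR_le_one G x z
          have h3 := wR_nonneg G (k+1) z y
          nlinarith [IH z y]
      _ = (Fintype.card V : ℝ) ^ k * (Fintype.card V : ℝ) := by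
          rw [Finset.sum_const, Finset.card_univ]; simp [mul_comm]

lemma WRR_even (j : ℕ) : WRR G (j + j) = ∑ z, (FR G j z) ^ 2 := by
  unfold WRR FR
  calc ∑ x, ∑ y, wR G (j+j) x y
      = ∑ x, ∑ y, ∑ z, wR G j x z * wR G j z y := by
        apply Finset.sum_congr rfl; intro x _
        apply Finset.sum_congr rfl; intro y _
        rw [wR_add]
    _ = ∑ x, ∑ z, ∑ y, wR G j x z * wR G j z y := by
        apply Finset.sum_congr rfl; intro x _; exact Finset.sum_comm
    _ = ∑ z, ∑ x, ∑ y, wR G j x z * wR G j z y := Finset.sum_comm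
    _ = ∑ z, (∑ x, wR G j x z) * (∑ y, wR G j z y) := by
        apply Finset.sum_congr rfl; intro z _
        rw [Finset.sum_mul]
        apply Finset.sum_congr rfl; intro x _
        rw [Finset.mul_sum]
    _ = ∑ z, (∑ y, wR G j z y) ^ 2 := by
        apply Finset.sum_congr rfl; intro z _
        have : ∑ x, wR G j x z = ∑ x, wR G j z x := by
          apply Finset.sum_congr rfl; intro x _; rw [wR_comm]
        rw [this, sq]

lemma WRR_odd (j : ℕ) : WRR G (j + (j + 1)) = ∑ u, ∑ v, aR G u v * FR G j u * FR G j v := by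
  unfold WRR FR
  calc ∑ x, ∑ y, wR G (j + (j+1)) x y
      = ∑ x, ∑ y, ∑ u, wR G j x u * wR G (j+1) u y := by
        apply Finset.sum_congr rfl; intro x _
        apply Finset.sum_congr rfl; intro y _
        rw [wR_add]
    _ = ∑ x, ∑ y, ∑ u, ∑ v, wR G j x u * (aR G u v * wR G j v y) := by
        apply Finset.sum_congr rfl; intro x _
        apply Finset.sum_congr rfl; intro y _
        apply Finset.sum_congr rfl; intro u _
        rw [wR_succ, Finset.mul_sum]
    _ = ∑ x, ∑ u, ∑ y, ∑ v, wR G j x u * (aR G u v * wR G j v y) := by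
        apply Finset.sum_congr rfl; intro x _
        exact Finset.sum_comm
    _ = ∑ u, ∑ x, ∑ y, ∑ v, wR G j x u * (aR G u v * wR G j v y) := Finset.sum_comm
    _ = ∑ u, ∑ x, ∑ v, ∑ y, wR G j x u * (aR G u v * wR G j v y) := by
        apply Finset.sum_congr rfl; intro u _
        apply Finset.sum_congr rfl; intro x _
        exact Finset.sum_comm
    _ = ∑ u, ∑ v, ∑ x, ∑ y, wR G j x u * (aR G u v * wR G j v y) := by
        apply Finset.sum_congr rfl; intro u _
        exact Finset.sum_comm
    _ = ∑ u, ∑ v, aR G u v * (∑ x, wR G j x u) * (∑ y, wR G j v y) := by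
        apply Finset.sum_congr rfl; intro u _
        apply Finset.sum_congr rfl; intro v _
        simp only [Finset.mul_sum, Finset.sum_mul]
        rw [Finset.sum_comm]
        apply Finset.sum_congr rfl; intro x _
        apply Finset.sum_congr rfl; intro y _
        ring
    _ = ∑ u, ∑ v, aR G u v * (∑ x, wR G j u x) * (∑ y, wR G j v y) := by
        apply Finset.sum_congr rfl; intro u _
        apply Finset.sum_congr rfl; intro v _
        have : ∑ x, wR G j x u = ∑ x, wR G j u x := by
          apply Finset.sum_congr rfl; intro x _; rw [wR_comm]
        rw [this]

end OCA
end P3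

section P4
open Finset
namespace OCA
variable {V : Type*} [Fintype V] (G : SimpleGraph V)

lemma closed_eq (m : ℕ) :
    closedWalkCount G (2 * m + 1) =
      ∑ x, ∑ y, (if G.Adj y x then walkCount G (2 * m) x y else 0) := by
  classical
  have hiff : ∀ f : Fin (2 * m + 1) → V,
      (∀ i, G.Adj (f i) (f (finRotate (2 * m + 1) i))) ↔
        ((∀ i : Fin (2 * m), G.Adj (f i.castSucc) (f i.succ)) ∧
          G.Adj (f (Fin.last (2 * m))) (f 0)) := by
    intro f
    constructor
    · intro h
      constructor
      · intro i
        have := h i.castSucc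
        rwa [finRotate_succ_apply, Fin.coeSucc_eq_succ] at this
      · have := h (Fin.last (2 * m))
        rwa [finRotate_succ_apply, Fin.last_add_one] at this
    · rintro ⟨h1, h2⟩ i
      induction i using Fin.lastCases with
      | last => rw [finRotate_succ_apply, Fin.last_add_one]; exact h2
      | cast j =>
        rw [finRotate_succ_apply, Fin.coeSucc_eq_succ]
        exact h1 j
  unfold closedWalkCount
  rw [Finset.filter_congr (fun f _ => by rw [hiff f])]
  rw [Finset.card_eq_sum_card_fiberwise
    (f := fun f : Fin (2 * m + 1) → V => (f 0, f (Fin.last (2 * m))))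
    (t := Finset.univ) (fun f _ => mem_univ _)]
  rw [Fintype.sum_prod_type]
  apply Finset.sum_congr rfl; intro x _
  apply Finset.sum_congr rfl; intro y _
  rcases em (G.Adj y x) with hxy | hxy
  · rw [if_pos hxy]
    unfold walkCount
    congr 1
    ext f
    simp only [Finset.mem_filter, Finset.mem_univ, true_and, Prod.mk.injEq]
    constructor
    · rintro ⟨⟨hp, hw⟩, h0, hl⟩
      exact ⟨h0, hl, hp⟩
    · rintro ⟨h0, hl, hp⟩
      exact ⟨⟨hp, by rw [h0, hl]; exact hxy⟩, h0, hl⟩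
  · rw [if_neg hxy, Finset.card_eq_zero, Finset.filter_eq_empty_iff]
    rintro f hf hp
    have h0 : f 0 = x := congrArg Prod.fst hp
    have hl : f (Fin.last (2 * m)) = y := congrArg Prod.snd hp
    rw [Finset.mem_filter] at hf
    exact hxy (by rw [← h0, ← hl]; exact hf.2.2)

lemma pairs_eq (X : Finset V) :
    ∑ u ∈ X, ∑ v ∈ X, (if G.Adj u v then (1 : ℕ) else 0) = 2 * edgesIn G X := by
  classical
  have lhs_eq : ∑ u ∈ X, ∑ v ∈ X, (if G.Adj u v then (1 : ℕ) else 0) =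
      ((X ×ˢ X).filter (fun p : V × V => G.Adj p.1 p.2)).card := by
    rw [Finset.card_filter]
    rw [Finset.sum_product]
  rw [lhs_eq]
  unfold edgesIn
  rw [Finset.card_eq_sum_card_fiberwise (H := (?_ : Set.MapsTo (fun p : V × V => s(p.1, p.2))
    (((X ×ˢ X).filter (fun p : V × V => G.Adj p.1 p.2)) : Set (V × V))
    ((G.edgeFinset.filter (fun e : Sym2 V => ∀ v ∈ e, v ∈ X)) : Set (Sym2 V))))]
  · rw [Finset.sum_congr rfl (g := fun _ => 2) ?_]
    · rw [Finset.sum_const, smul_eq_mul, mul_comm]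
    · intro e he
      rw [Finset.mem_filter, SimpleGraph.mem_edgeFinset] at he
      obtain ⟨heE, heX⟩ := he
      induction e with
      | _ a b =>
        have hab : G.Adj a b := heE
        have haX : a ∈ X := heX a (Sym2.mem_mk_left a b)
        have hbX : b ∈ X := heX b (Sym2.mem_mk_right a b)
        have hne : a ≠ b := G.ne_of_adj hab
        have : ((X ×ˢ X).filter (fun p : V × V => G.Adj p.1 p.2)).filter
            (fun p => s(p.1, p.2) = s(a, b)) = {(a, b), (b, a)} := by
          ext ⟨p1, p2⟩
          simp only [Finset.mem_filter, Finset.mem_product, Finset.mem_insert,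
            Finset.mem_singleton, Sym2.eq_iff, Prod.mk.injEq]
          constructor
          · rintro ⟨⟨-, -⟩, (⟨rfl, rfl⟩ | ⟨rfl, rfl⟩)⟩
            · left; exact ⟨rfl, rfl⟩
            · right; exact ⟨rfl, rfl⟩
          · rintro (⟨rfl, rfl⟩ | ⟨rfl, rfl⟩)
            · exact ⟨⟨⟨haX, hbX⟩, hab⟩, Or.inl ⟨rfl, rfl⟩⟩
            · exact ⟨⟨⟨hbX, haX⟩, hab.symm⟩, Or.inr ⟨rfl, rfl⟩⟩
        rw [this]
        rw [Finset.card_insert_of_notMem (by simp [hne]), Finset.card_singleton]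
  · intro p hp
    rw [Finset.mem_coe, Finset.mem_filter, Finset.mem_product] at hp
    rw [Finset.mem_coe, Finset.mem_filter, SimpleGraph.mem_edgeFinset]
    refine ⟨hp.2, ?_⟩
    intro v hv
    rw [Sym2.mem_iff] at hv
    rcases hv with rfl | rfl
    · exact hp.1.1
    · exact hp.1.2

lemma pairsR_eq (X : Finset V) :
    ∑ u ∈ X, ∑ v ∈ X, aR G u v = 2 * (edgesIn G X : ℝ) := by
  have := pairs_eq G X
  have cast_eq : ((∑ u ∈ X, ∑ v ∈ X, (if G.Adj u v then (1:ℕ) else 0) : ℕ) : ℝ) =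
      ∑ u ∈ X, ∑ v ∈ X, aR G u v := by
    push_cast
    apply Finset.sum_congr rfl; intro u _
    apply Finset.sum_congr rfl; intro v _
    unfold aR; split <;> norm_num
  rw [← cast_eq, this]
  push_cast
  ring

end OCA
end P4

section P5
open Finset
namespace OCA
variable {V : Type*} [Fintype V] (G : SimpleGraph V)

lemma qf_split (g : V → ℝ) (v : V) :
    ∑ u, ∑ w, aR G u w * g u * g w =
      (∑ u ∈ univ.erase v, ∑ w ∈ univ.erase v, aR G u w * g u * g w)
        + 2 * g v * ∑ w ∈ univ.erase v, aR G v w * g w := by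
  have hsplit : ∀ F : V → ℝ, ∑ u, F u = F v + ∑ u ∈ univ.erase v, F u :=
    fun F => (Finset.add_sum_erase _ F (mem_univ v)).symm
  rw [hsplit (fun u => ∑ w, aR G u w * g u * g w)]
  have hrow : ∑ w, aR G v w * g v * g w = g v * ∑ w ∈ univ.erase v, aR G v w * g w := by
    rw [hsplit (fun w => aR G v w * g v * g w)]
    rw [aR_self]
    rw [Finset.mul_sum]
    simp only [zero_mul, zero_add]
    apply Finset.sum_congr rfl; intro w _; ring
  rw [hrow]
  have hinner : ∀ u, u ∈ univ.erase v →
      ∑ w, aR G u w * g u * g w =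
        aR G u v * g u * g v + ∑ w ∈ univ.erase v, aR G u w * g u * g w := by
    intro u _
    rw [hsplit (fun w => aR G u w * g u * g w)]
  rw [Finset.sum_congr rfl hinner]
  rw [Finset.sum_add_distrib]
  have hcol : ∑ u ∈ univ.erase v, aR G u v * g u * g v =
      g v * ∑ w ∈ univ.erase v, aR G v w * g w := by
    rw [Finset.mul_sum]
    apply Finset.sum_congr rfl; intro u _
    rw [aR_comm]; ring
  rw [hcol]
  ring

lemma quad_lower (d c M : ℝ) (hd : 0 ≤ d) (hM : 0 ≤ M)
    (hbin : ∀ X : Finset V, d * (X.card : ℝ) ^ 2 - c ≤ ∑ u ∈ X, ∑ v ∈ X, aR G u v) :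
    ∀ f : V → ℝ, (∀ v, 0 ≤ f v ∧ f v ≤ M) →
      d * (∑ v, f v) ^ 2 - c * M ^ 2 ≤ ∑ u, ∑ w, aR G u w * f u * f w := by
  suffices H : ∀ N : ℕ, ∀ f : V → ℝ, (∀ v, 0 ≤ f v ∧ f v ≤ M) →
      (univ.filter (fun v => f v ≠ 0 ∧ f v ≠ M)).card = N →
      d * (∑ v, f v) ^ 2 - c * M ^ 2 ≤ ∑ u, ∑ w, aR G u w * f u * f w by
    exact fun f hf => H _ f hf rfl
  intro N
  induction N using Nat.strong_induction_on with
  | _ N IH =>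
    intro f hf hN
    by_cases h0 : (univ.filter (fun v => f v ≠ 0 ∧ f v ≠ M)) = ∅
    · -- all values are 0 or M
      have hvals : ∀ v, f v = 0 ∨ f v = M := by
        intro v
        by_contra hc
        push_neg at hc
        have hmem : v ∈ univ.filter (fun v => f v ≠ 0 ∧ f v ≠ M) :=
          Finset.mem_filter.2 ⟨mem_univ v, hc⟩
        rw [h0] at hmem
        exact absurd hmem (Finset.notMem_empty v)
      set X := univ.filter (fun v => f v = M) with hX
      have hind : ∀ g : V → ℝ, ∑ u, f u * g u = M * ∑ u ∈ X, g u := by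
        intro g
        rw [← Finset.sum_filter_add_sum_filter_not univ (fun v => f v = M)]
        have h1 : ∑ u ∈ univ.filter (fun v => f v = M), f u * g u = M * ∑ u ∈ X, g u := by
          rw [Finset.mul_sum]
          apply Finset.sum_congr rfl
          intro u hu
          rw [(Finset.mem_filter.1 hu).2]
        have h2 : ∑ u ∈ univ.filter (fun v => ¬ f v = M), f u * g u = 0 := by
          apply Finset.sum_eq_zero
          intro u hu
          have := (Finset.mem_filter.1 hu).2
          rcases hvals u with h | h
          · rw [h, zero_mul]
          · exact absurd h this
        rw [h1, h2, add_zero]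
      have hsum : ∑ v, f v = M * (X.card : ℝ) := by
        have := hind (fun _ => 1)
        simpa using this
      have hquad : ∑ u, ∑ w, aR G u w * f u * f w =
          M ^ 2 * ∑ u ∈ X, ∑ w ∈ X, aR G u w := by
        calc ∑ u, ∑ w, aR G u w * f u * f w
            = ∑ u, f u * (∑ w, f w * aR G u w) := by
              apply Finset.sum_congr rfl; intro u _
              rw [Finset.mul_sum]
              apply Finset.sum_congr rfl; intro w _; ring
          _ = ∑ u, f u * (M * ∑ w ∈ X, aR G u w) := by
              apply Finset.sum_congr rfl; intro u _
              rw [hind (fun w => aR G u w)]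
          _ = M * ∑ u ∈ X, (M * ∑ w ∈ X, aR G u w) := hind _
          _ = M ^ 2 * ∑ u ∈ X, ∑ w ∈ X, aR G u w := by
              rw [Finset.mul_sum, Finset.mul_sum]
              apply Finset.sum_congr rfl; intro u _; ring
      rw [hsum, hquad]
      have hb := hbin X
      nlinarith [mul_le_mul_of_nonneg_left hb (sq_nonneg M)]
    · -- there is a vertex with intermediate value
      obtain ⟨v, hv⟩ := Finset.nonempty_iff_ne_empty.2 h0
      have hvmem := Finset.mem_filter.1 hv
      obtain ⟨hv0, hvM⟩ := hvmem.2
      have hf0 := (hf v).1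
      have hfM := (hf v).2
      have htpos : 0 < f v := lt_of_le_of_ne hf0 (Ne.symm hv0)
      have htM : f v < M := lt_of_le_of_ne hfM hvM
      have hMpos : 0 < M := lt_of_lt_of_le htpos hfM
      set A := ∑ u ∈ univ.erase v, ∑ w ∈ univ.erase v, aR G u w * f u * f w with hA
      set B := ∑ w ∈ univ.erase v, aR G v w * f w with hB
      set s := ∑ u ∈ univ.erase v, f u with hs
      have hupdQF : ∀ t : ℝ,
          ∑ u, ∑ w, aR G u w * (Function.update f v t u) * (Function.update f v t w) =
            A + 2 * t * B := by
        intro t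
        rw [qf_split G (Function.update f v t) v]
        have e1 : ∑ u ∈ univ.erase v, ∑ w ∈ univ.erase v,
            aR G u w * (Function.update f v t u) * (Function.update f v t w) = A := by
          apply Finset.sum_congr rfl; intro u hu
          apply Finset.sum_congr rfl; intro w hw
          rw [Function.update_of_ne (Finset.mem_erase.1 hu).1,
            Function.update_of_ne (Finset.mem_erase.1 hw).1]
        have e2 : ∑ w ∈ univ.erase v, aR G v w * (Function.update f v t w) = B := by
          apply Finset.sum_congr rfl; intro w hw
          rw [Function.update_of_ne (Finset.mem_erase.1 hw).1]
        rw [e1, e2, Function.update_self]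
      have hupdS : ∀ t : ℝ, ∑ u, Function.update f v t u = s + t := by
        intro t
        rw [← Finset.add_sum_erase _ _ (mem_univ v), Function.update_self]
        have : ∑ u ∈ univ.erase v, Function.update f v t u = s := by
          apply Finset.sum_congr rfl; intro u hu
          rw [Function.update_of_ne (Finset.mem_erase.1 hu).1]
        rw [this]; ring
      have hcard : ∀ t : ℝ, t = 0 ∨ t = M →
          (univ.filter (fun u => Function.update f v t u ≠ 0 ∧ Function.update f v t u ≠ M)).card
            < N := by
        intro t ht
        have hset : univ.filter (fun u => Function.update f v t u ≠ 0 ∧ Function.update f v t u ≠ M)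
            = (univ.filter (fun u => f u ≠ 0 ∧ f u ≠ M)).erase v := by
          ext u
          simp only [Finset.mem_filter, Finset.mem_erase, Finset.mem_univ, true_and]
          by_cases hu : u = v
          · subst hu
            rw [Function.update_self]
            rcases ht with rfl | rfl
            · simp
            · simp
          · rw [Function.update_of_ne hu]
            constructor
            · intro h; exact ⟨hu, h⟩
            · intro h; exact h.2
        rw [hset, Finset.card_erase_of_mem hv, hN]
        have : 0 < N := by
          rw [← hN]
          exact Finset.card_pos.2 ⟨v, hv⟩
        omega
      have hbound : ∀ t : ℝ, 0 ≤ t → t ≤ M → ∀ u, 0 ≤ Function.update f v t u ∧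
          Function.update f v t u ≤ M := by
        intro t ht1 ht2 u
        by_cases hu : u = v
        · subst hu; rw [Function.update_self]; exact ⟨ht1, ht2⟩
        · rw [Function.update_of_ne hu]; exact hf u
      have IH0 : d * (s + 0) ^ 2 - c * M ^ 2 ≤ A + 2 * 0 * B := by
        have := IH _ (hcard 0 (Or.inl rfl)) (Function.update f v 0)
          (hbound 0 le_rfl hM) rfl
        rwa [hupdQF 0, hupdS 0] at this
      have IHM : d * (s + M) ^ 2 - c * M ^ 2 ≤ A + 2 * M * B := by
        have := IH _ (hcard M (Or.inr rfl)) (Function.update f v M)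
          (hbound M hM le_rfl) rfl
        rwa [hupdQF M, hupdS M] at this
      have hgoalQF : ∑ u, ∑ w, aR G u w * f u * f w = A + 2 * (f v) * B := by
        have := hupdQF (f v)
        rwa [Function.update_eq_self] at this
      have hgoalS : ∑ u, f u = s + f v := by
        have := hupdS (f v)
        rwa [Function.update_eq_self] at this
      rw [hgoalQF, hgoalS]
      have key : M * (d * (s + f v) ^ 2 - c * M ^ 2) ≤ M * (A + 2 * (f v) * B) := by
        have h1 : (M - f v) * (d * (s + 0) ^ 2 - c * M ^ 2) ≤ (M - f v) * (A + 2 * 0 * B) :=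
          mul_le_mul_of_nonneg_left IH0 (by linarith)
        have h2 : (f v) * (d * (s + M) ^ 2 - c * M ^ 2) ≤ (f v) * (A + 2 * M * B) :=
          mul_le_mul_of_nonneg_left IHM (le_of_lt htpos)
        nlinarith [mul_nonneg (mul_nonneg hd (le_of_lt htpos)) (sub_nonneg.2 (le_of_lt htM))]
      exact le_of_mul_le_mul_left key hMpos

end OCA
end P5

section P6
open Finset
namespace OCA
variable {V : Type*} [Fintype V] (G : SimpleGraph V)

lemma sqlb {A B u : ℝ} (hA : 0 ≤ A) (hB : 0 ≤ B) (hu : 0 ≤ u) (h : A - B ≤ u) :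
    A ^ 2 - 2 * A * B ≤ u ^ 2 := by
  rcases le_or_gt A B with hab | hab
  · nlinarith
  · nlinarith

lemma WRR_nonneg (k : ℕ) : 0 ≤ WRR G k :=
  Finset.sum_nonneg fun x _ => FR_nonneg G k x

lemma hbin_of_dense (ε d : ℝ) (hε : 0 < ε) (hε1 : ε < 1) (hd0 : 0 ≤ d) (hd1 : d ≤ 1)
    (hG : IsEpsDense G ε d) (hεN : 1 ≤ ε * (Fintype.card V : ℝ)) :
    ∀ X : Finset V,
      d * (X.card : ℝ) ^ 2 -
          (1 - d) * (ε ^ 2 * (Fintype.card V : ℝ) ^ 2 + 3 * ε * (Fintype.card V : ℝ)) ≤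
        ∑ u ∈ X, ∑ v ∈ X, aR G u v := by
  intro X
  set N : ℝ := (Fintype.card V : ℝ) with hNdef
  have hN0 : 0 < N := by
    have : (0:ℝ) < ε * N := lt_of_lt_of_le one_pos hεN
    nlinarith
  rcases le_or_gt (ε * N) (X.card : ℝ) with hbig | hsmall
  · rw [pairsR_eq]
    have := hG X hbig
    have hnn : 0 ≤ (1 - d) * (ε ^ 2 * N ^ 2 + 3 * ε * N) := by
      apply mul_nonneg (by linarith)
      have : 0 ≤ ε * N := by positivity
      nlinarith
    linarith
  · -- pad X to a set of size ⌈εN⌉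
    set t : ℕ := ⌈ε * N⌉₊ with htdef
    have htreal : ε * N ≤ (t : ℝ) := Nat.le_ceil _
    have htub : (t : ℝ) ≤ ε * N + 1 := le_of_lt (Nat.ceil_lt_add_one (by positivity))
    have hXt : X.card ≤ t := by
      have : (X.card : ℝ) ≤ (t : ℝ) := le_trans (le_of_lt hsmall) htreal
      exact_mod_cast this
    have htn : t ≤ Fintype.card V := by
      apply Nat.ceil_le.2
      calc ε * N ≤ 1 * N := by nlinarith
        _ = (Fintype.card V : ℝ) := by rw [one_mul]
    obtain ⟨Y, hXY, hYcard⟩ := Finset.exists_superset_card_eq hXt htn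
    have hYpairs : d * (t : ℝ) ^ 2 ≤ ∑ u ∈ Y, ∑ v ∈ Y, aR G u v := by
      rw [pairsR_eq]
      have := hG Y (by rw [hYcard]; exact htreal)
      rw [hYcard] at this
      linarith
    -- compare pairs over Y and over X
    have hprodsub : X ×ˢ X ⊆ Y ×ˢ Y := Finset.product_subset_product hXY hXY
    have hsplit : ∑ p ∈ (Y ×ˢ Y) \ (X ×ˢ X), aR G p.1 p.2 + ∑ p ∈ X ×ˢ X, aR G p.1 p.2 =
        ∑ p ∈ Y ×ˢ Y, aR G p.1 p.2 := Finset.sum_sdiff hprodsub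
    have hXpairs : ∑ p ∈ X ×ˢ X, aR G p.1 p.2 = ∑ u ∈ X, ∑ v ∈ X, aR G u v :=
      Finset.sum_product _ _ _
    have hYpairs2 : ∑ p ∈ Y ×ˢ Y, aR G p.1 p.2 = ∑ u ∈ Y, ∑ v ∈ Y, aR G u v :=
      Finset.sum_product _ _ _
    -- bound the sdiff sum
    set D := (Y ×ˢ Y) \ (X ×ˢ X) with hD
    have hDbound : ∑ p ∈ D, aR G p.1 p.2 ≤
        ((t : ℝ) ^ 2 - (X.card : ℝ) ^ 2) - ((t : ℝ) - (X.card : ℝ)) := by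
      have hptwise : ∀ p ∈ D, aR G p.1 p.2 ≤ (if p.1 = p.2 then (0:ℝ) else 1) := by
        intro p _
        split
        · next h => rw [h, aR_self]
        · exact aR_le_one G _ _
      calc ∑ p ∈ D, aR G p.1 p.2 ≤ ∑ p ∈ D, (if p.1 = p.2 then (0:ℝ) else 1) :=
            Finset.sum_le_sum hptwise
        _ = ((D.filter (fun p => ¬ p.1 = p.2)).card : ℝ) := by
            rw [Finset.sum_ite, Finset.sum_const, Finset.sum_const]
            simp
        _ = ((D.card : ℝ) - ((D.filter (fun p => p.1 = p.2)).card : ℝ)) := by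
            have := Finset.card_filter_add_card_filter_not
              (s := D) (p := fun p : V × V => p.1 = p.2)
            have hcast : ((D.filter (fun p => p.1 = p.2)).card : ℝ)
                + ((D.filter (fun p => ¬ p.1 = p.2)).card : ℝ) = (D.card : ℝ) := by
              exact_mod_cast congrArg (Nat.cast : ℕ → ℝ) this
            linarith
        _ = ((t : ℝ) ^ 2 - (X.card : ℝ) ^ 2) - ((t : ℝ) - (X.card : ℝ)) := by
            have hc1 : (D.card : ℝ) = (t : ℝ) ^ 2 - (X.card : ℝ) ^ 2 := by
              rw [hD, Finset.card_sdiff_of_subset hprodsub]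
              have h1 : (Y ×ˢ Y).card = t * t := by rw [Finset.card_product, hYcard]
              have h2 : (X ×ˢ X).card = X.card * X.card := Finset.card_product _ _
              have hle : (X ×ˢ X).card ≤ (Y ×ˢ Y).card := Finset.card_le_card hprodsub
              rw [Nat.cast_sub hle, h1, h2]
              push_cast
              ring
            have hc2 : ((D.filter (fun p => p.1 = p.2)).card : ℝ) = (t : ℝ) - (X.card : ℝ) := by
              have hset : D.filter (fun p => p.1 = p.2) = (Y \ X).image (fun u => (u, u)) := by
                ext ⟨p1, p2⟩
                simp only [Finset.mem_filter, hD, Finset.mem_sdiff, Finset.mem_product,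
                  Finset.mem_image, Prod.mk.injEq]
                constructor
                · rintro ⟨⟨⟨hp1Y, hp2Y⟩, hnX⟩, heq⟩
                  subst heq
                  refine ⟨p1, ⟨hp1Y, fun hX => hnX ⟨hX, hX⟩⟩, rfl, rfl⟩
                · rintro ⟨u, ⟨huY, huX⟩, rfl, rfl⟩
                  exact ⟨⟨⟨huY, huY⟩, fun h => huX h.1⟩, rfl⟩
              have hinj : Function.Injective (fun u : V => (u, u)) := by
                intro a b h
                exact congrArg Prod.fst h
              rw [hset, Finset.card_image_of_injective _ hinj]
              rw [Finset.card_sdiff_of_subset hXY, Nat.cast_sub (Finset.card_le_card hXY), hYcard]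
            rw [hc1, hc2]
    have hXlow : d * (t:ℝ)^2 - (((t : ℝ)^2 - (X.card:ℝ)^2) - ((t:ℝ) - (X.card:ℝ))) ≤
        ∑ u ∈ X, ∑ v ∈ X, aR G u v := by
      rw [← hXpairs]
      have := hsplit
      rw [hYpairs2] at this
      linarith [hDbound, hYpairs]
    -- numeric conclusion
    have hx0 : (0:ℝ) ≤ (X.card : ℝ) := Nat.cast_nonneg _
    have hxt : (X.card : ℝ) ≤ (t : ℝ) := by exact_mod_cast hXt
    have h1d : (0:ℝ) ≤ 1 - d := by linarith
    nlinarith [hXlow, mul_nonneg h1d (sq_nonneg ((t:ℝ))),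
      mul_le_mul_of_nonneg_left (sq_le_sq' (by nlinarith) htub) h1d,
      mul_nonneg h1d (mul_nonneg (le_of_lt hε) hx0)]

end OCA
end P6

section P7
open Finset
namespace OCA
variable {V : Type*} [Fintype V] (G : SimpleGraph V)

lemma chain_lemma (d κ : ℝ) (hd0 : 0 ≤ d) (hd1 : d ≤ 1) (hκ : 0 ≤ κ)
    (hN0 : 0 < (Fintype.card V : ℝ))
    (hbase : d * (Fintype.card V : ℝ) ^ 2 ≤ WRR G 1)
    (hbin : ∀ X : Finset V,
      d * (X.card : ℝ) ^ 2 - κ * (Fintype.card V : ℝ) ^ 2 ≤ ∑ u ∈ X, ∑ v ∈ X, aR G u v) :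
    ∀ k : ℕ, 1 ≤ k →
      (d ^ k - ((k : ℝ) - 1) * κ) * (Fintype.card V : ℝ) ^ (k + 1) ≤ WRR G k := by
  set N : ℝ := (Fintype.card V : ℝ) with hNdef
  intro k
  induction k using Nat.strong_induction_on with
  | _ k IH =>
    intro hk1
    rcases eq_or_lt_of_le hk1 with h1 | h2
    · rw [← h1]
      simpa using hbase
    · have hk2 : 2 ≤ k := h2
      rcases Nat.even_or_odd k with ⟨j, hj⟩ | ⟨j, hj⟩
      · -- even: k = j + j
        subst hj
        have hj1 : 1 ≤ j := by omega
        have hjk : j < j + j := by omega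
        have IHj := IH j hjk hj1
        have hWj0 : 0 ≤ WRR G j := WRR_nonneg G j
        have hci : (WRR G j) ^ 2 ≤ N * WRR G (j + j) := by
          rw [WRR_even]
          have := sq_sum_le_card_mul_sum_sq (s := (univ : Finset V)) (f := fun z => FR G j z)
          rw [Finset.card_univ] at this
          exact this
        have hdj1 : d ^ j ≤ 1 := pow_le_one₀ hd0 hd1
        have hdj0 : 0 ≤ d ^ j := pow_nonneg hd0 j
        have hj1R : (1:ℝ) ≤ (j:ℝ) := by exact_mod_cast hj1
        have hNp : (0:ℝ) ≤ N ^ (j+1) := by positivity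
        have hsq : (d ^ j * N ^ (j+1)) ^ 2 -
            2 * (d ^ j * N ^ (j+1)) * (((j:ℝ) - 1) * κ * N ^ (j+1)) ≤ (WRR G j) ^ 2 := by
          apply sqlb
          · positivity
          · have : (0:ℝ) ≤ (j:ℝ) - 1 := by linarith
            positivity
          · exact hWj0
          · calc (d ^ j * N ^ (j+1)) - ((j:ℝ) - 1) * κ * N ^ (j+1)
                = (d ^ j - ((j:ℝ) - 1) * κ) * N ^ (j+1) := by ring
              _ ≤ WRR G j := IHj
        have h2dj : 2 * d ^ j * ((j:ℝ) - 1) ≤ 2 * (j:ℝ) - 1 := by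
          have := mul_le_mul_of_nonneg_right hdj1 (by linarith : (0:ℝ) ≤ (j:ℝ) - 1)
          nlinarith [this]
        have hkey := mul_le_mul_of_nonneg_right
          (mul_le_mul_of_nonneg_right h2dj hκ) (mul_nonneg hNp hNp)
        have e1 : (j + j + 1 + 1) = (j+1) + (j+1) := by omega
        have e2 : (j + j) = j + j := rfl
        have key : (d ^ (j+j) - ((j+j : ℕ) - 1 : ℝ) * κ) * N ^ (j + j + 1) * N
            ≤ WRR G (j + j) * N := by
          calc (d ^ (j+j) - (((j+j : ℕ) : ℝ) - 1) * κ) * N ^ (j + j + 1) * N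
              = (d ^ j * d ^ j - (((j:ℝ) + (j:ℝ)) - 1) * κ) * (N ^ (j+1) * N ^ (j+1)) := by
                rw [mul_assoc, ← pow_succ, e1, pow_add (a := N) (m := j+1) (n := j+1),
                  pow_add (a := d) (m := j) (n := j)]
                push_cast
                ring
            _ ≤ (d ^ j * N ^ (j+1)) ^ 2 -
                2 * (d ^ j * N ^ (j+1)) * (((j:ℝ) - 1) * κ * N ^ (j+1)) := by
                nlinarith [hkey]
            _ ≤ (WRR G j) ^ 2 := hsq
            _ ≤ N * WRR G (j + j) := hci
            _ = WRR G (j + j) * N := by ring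
        have := le_of_mul_le_mul_right key hN0
        push_cast at this ⊢
        linarith
      · -- odd: k = 2j+1
        subst hj
        have hj1 : 1 ≤ j := by omega
        have hjk : j < 2 * j + 1 := by omega
        have IHj := IH j hjk hj1
        have hWj0 : 0 ≤ WRR G j := WRR_nonneg G j
        have hdj1 : d ^ j ≤ 1 := pow_le_one₀ hd0 hd1
        have hdj0 : 0 ≤ d ^ j := pow_nonneg hd0 j
        have hj1R : (1:ℝ) ≤ (j:ℝ) := by exact_mod_cast hj1
        have hNp : (0:ℝ) ≤ N ^ (j+1) := by positivity
        have hkform : 2 * j + 1 = j + (j + 1) := by omega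
        have hql : d * (WRR G j) ^ 2 - (κ * N ^ 2) * (N ^ j) ^ 2 ≤ WRR G (2 * j + 1) := by
          rw [hkform, WRR_odd]
          exact quad_lower G d (κ * N ^ 2) (N ^ j) hd0 (by positivity)
            (by intro X; have := hbin X; linarith) (fun x => FR G j x)
            (fun x => ⟨FR_nonneg G j x, FR_le G j x⟩)
        have hsq : (d ^ j * N ^ (j+1)) ^ 2 -
            2 * (d ^ j * N ^ (j+1)) * (((j:ℝ) - 1) * κ * N ^ (j+1)) ≤ (WRR G j) ^ 2 := by
          apply sqlb
          · positivity
          · have : (0:ℝ) ≤ (j:ℝ) - 1 := by linarith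
            positivity
          · exact hWj0
          · calc (d ^ j * N ^ (j+1)) - ((j:ℝ) - 1) * κ * N ^ (j+1)
                = (d ^ j - ((j:ℝ) - 1) * κ) * N ^ (j+1) := by ring
              _ ≤ WRR G j := IHj
        have hdd : d * d ^ j ≤ 1 := by nlinarith [hdj1, hdj0]
        have h2dj : d * (2 * d ^ j * ((j:ℝ) - 1)) + 1 ≤ 2 * (j:ℝ) := by
          have := mul_le_mul_of_nonneg_right hdd (by linarith : (0:ℝ) ≤ (j:ℝ) - 1)
          nlinarith [this]
        have hkey := mul_le_mul_of_nonneg_right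
          (mul_le_mul_of_nonneg_right h2dj hκ) (mul_nonneg hNp hNp)
        have e1 : 2 * j + 1 + 1 = (j+1) + (j+1) := by omega
        have e2 : d ^ (2 * j + 1) = d * (d ^ j * d ^ j) := by
          rw [pow_succ, two_mul, pow_add]; ring
        have e3 : (κ * N ^ 2) * (N ^ j) ^ 2 = κ * (N ^ (j+1) * N ^ (j+1)) := by
          have h : N ^ 2 * (N ^ j) ^ 2 = N ^ (j+1) * N ^ (j+1) := by
            rw [← pow_mul, ← pow_add, ← pow_add]
            congr 1
            omega
          rw [mul_assoc, h]
        have hdW := mul_le_mul_of_nonneg_left hsq hd0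
        calc (d ^ (2*j+1) - (((2*j+1 : ℕ) : ℝ) - 1) * κ) * N ^ (2*j+1 + 1)
            = (d * (d ^ j * d ^ j) - 2 * (j:ℝ) * κ) * (N ^ (j+1) * N ^ (j+1)) := by
              rw [e1, pow_add (a := N) (m := j+1) (n := j+1), e2]
              push_cast
              ring
          _ ≤ d * ((d ^ j * N ^ (j+1)) ^ 2 -
              2 * (d ^ j * N ^ (j+1)) * (((j:ℝ) - 1) * κ * N ^ (j+1)))
              - κ * (N ^ (j+1) * N ^ (j+1)) := by
              nlinarith [hkey]
          _ ≤ d * (WRR G j) ^ 2 - κ * (N ^ (j+1) * N ^ (j+1)) := by linarith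
          _ = d * (WRR G j) ^ 2 - (κ * N ^ 2) * (N ^ j) ^ 2 := by rw [e3]
          _ ≤ WRR G (2 * j + 1) := hql

end OCA
end P7

section P8
open Finset OCA

theorem odd_cycle_count {V : Type*} [Fintype V] (G : SimpleGraph V) (r : ℕ)
    (hr : Odd r) (hr3 : 3 ≤ r) (ε d : ℝ) (hε : 0 < ε) (hε1 : ε < 1)
    (hd0 : 0 ≤ d) (hd1 : d ≤ 1)
    (hn : 2 / (ε - ε ^ 2) ≤ (Fintype.card V : ℝ))
    (hG : IsEpsDense G ε d) :
    (d ^ r - ε) * (Fintype.card V : ℝ) ^ r ≤ (closedWalkCount G r : ℝ) := by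
  classical
  obtain ⟨m, hm⟩ := hr
  have hm1 : 1 ≤ m := by omega
  obtain ⟨s, hs⟩ : ∃ s, m = s + 1 := ⟨m - 1, by omega⟩
  set N : ℝ := (Fintype.card V : ℝ) with hNdef
  have hεε : 0 < ε - ε ^ 2 := by nlinarith
  have hN0 : (0:ℝ) < N := lt_of_lt_of_le (by positivity) hn
  have h2N : 2 ≤ (ε - ε ^ 2) * N := by
    rw [div_le_iff₀ hεε] at hn
    linarith
  have hεN2 : 2 ≤ ε * N := by nlinarith [sq_nonneg ε]
  have hεN1 : 1 ≤ ε * N := by linarith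
  have hC0 : (0:ℝ) ≤ (closedWalkCount G r : ℝ) := Nat.cast_nonneg _
  have hNr0 : (0:ℝ) ≤ N ^ r := by positivity
  rcases le_or_gt (d ^ r) ε with htriv | hεd
  · have : (d ^ r - ε) * N ^ r ≤ 0 := mul_nonpos_of_nonpos_of_nonneg (by linarith) hNr0
    linarith
  · have hd_pos : 0 < d := by
      rcases eq_or_lt_of_le hd0 with h | h
      · exfalso
        rw [← h, zero_pow (by omega : r ≠ 0)] at hεd
        exact absurd hεd (not_lt.2 (le_of_lt hε))
      · exact h
    -- the defect constant
    set κ : ℝ := (1 - d) * (ε ^ 2 + 3 * ε / N) with hκdef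
    have hκ0 : 0 ≤ κ := by
      apply mul_nonneg (by linarith)
      positivity
    have hκN : κ * N ^ 2 = (1 - d) * (ε ^ 2 * N ^ 2 + 3 * ε * N) := by
      rw [hκdef]
      field_simp
    have hbin : ∀ X : Finset V,
        d * (X.card : ℝ) ^ 2 - κ * N ^ 2 ≤ ∑ u ∈ X, ∑ v ∈ X, aR G u v := by
      intro X
      rw [hκN]
      exact hbin_of_dense G ε d hε hε1 hd0 hd1 hG hεN1 X
    have hbase : d * N ^ 2 ≤ WRR G 1 := by
      have hW1 : WRR G 1 = ∑ u, ∑ v, aR G u v := by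
        unfold WRR FR
        apply Finset.sum_congr rfl; intro u _
        apply Finset.sum_congr rfl; intro v _
        rw [wR_one]
      rw [hW1, pairsR_eq]
      have huc : ((univ : Finset V).card : ℝ) = N := by rw [Finset.card_univ]
      have := hG univ (by rw [huc]; nlinarith)
      rw [huc] at this
      linarith
    have hchain := chain_lemma G d κ hd0 hd1 hκ0 hN0 hbase hbin m hm1
    -- the cycle-count identity
    have hCR : (closedWalkCount G r : ℝ) =
        ∑ z, ∑ x, ∑ y, aR G x y * wR G m z x * wR G m z y := by
      rw [hm]
      have h0 : (closedWalkCount G (2 * m + 1) : ℝ) =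
          ∑ x, ∑ y, (if G.Adj y x then (wR G (2 * m) x y) else 0) := by
        rw [closed_eq G m]
        push_cast
        rfl
      rw [h0]
      calc ∑ x, ∑ y, (if G.Adj y x then (wR G (2 * m) x y) else 0)
          = ∑ x, ∑ y, aR G y x * wR G (2 * m) x y := by
            apply Finset.sum_congr rfl; intro x _
            apply Finset.sum_congr rfl; intro y _
            unfold aR
            by_cases h : G.Adj y x <;> simp [h]
        _ = ∑ x, ∑ y, ∑ z, aR G y x * (wR G m x z * wR G m z y) := by
            apply Finset.sum_congr rfl; intro x _
            apply Finset.sum_congr rfl; intro y _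
            rw [two_mul, wR_add, Finset.mul_sum]
        _ = ∑ x, ∑ z, ∑ y, aR G y x * (wR G m x z * wR G m z y) := by
            apply Finset.sum_congr rfl; intro x _
            exact Finset.sum_comm
        _ = ∑ z, ∑ x, ∑ y, aR G y x * (wR G m x z * wR G m z y) := Finset.sum_comm
        _ = ∑ z, ∑ x, ∑ y, aR G x y * wR G m z x * wR G m z y := by
            apply Finset.sum_congr rfl; intro z _
            apply Finset.sum_congr rfl; intro x _
            apply Finset.sum_congr rfl; intro y _
            rw [aR_comm, wR_comm G m x z]
            ring
    -- per-vertex quadratic form bound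
    have hper : ∀ z : V, d * (FR G m z) ^ 2 - (κ * N ^ 2) * (N ^ s) ^ 2 ≤
        ∑ x, ∑ y, aR G x y * wR G m z x * wR G m z y := by
      intro z
      exact quad_lower G d (κ * N ^ 2) (N ^ s) hd0 (by positivity)
        (by intro X; have := hbin X; linarith) (fun x => wR G m z x)
        (fun x => ⟨wR_nonneg G m z x, by rw [hs]; exact wR_le G s z x⟩)
    have hsumper : d * (∑ z, (FR G m z) ^ 2) - (κ * N ^ 2) * (N ^ s) ^ 2 * N ≤
        (closedWalkCount G r : ℝ) := by
      rw [hCR]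
      have := Finset.sum_le_sum (fun z (_ : z ∈ (univ : Finset V)) => hper z)
      have hconst : ∑ _z : V, (d * (FR G m _z) ^ 2 - (κ * N ^ 2) * (N ^ s) ^ 2) =
          d * (∑ z, (FR G m z) ^ 2) - (κ * N ^ 2) * (N ^ s) ^ 2 * N := by
        rw [Finset.sum_sub_distrib, Finset.sum_const, Finset.card_univ, ← Finset.mul_sum]
        rw [nsmul_eq_mul]
        ring
      calc d * (∑ z, (FR G m z) ^ 2) - (κ * N ^ 2) * (N ^ s) ^ 2 * N
          = ∑ z : V, (d * (FR G m z) ^ 2 - (κ * N ^ 2) * (N ^ s) ^ 2) := hconst.symm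
        _ ≤ ∑ z, ∑ x, ∑ y, aR G x y * wR G m z x * wR G m z y := this
    -- Chebyshev
    have hcheb : (WRR G m) ^ 2 ≤ N * ∑ z, (FR G m z) ^ 2 := by
      have := sq_sum_le_card_mul_sum_sq (s := (univ : Finset V)) (f := fun z => FR G m z)
      rw [Finset.card_univ] at this
      exact this
    have hWm0 : 0 ≤ WRR G m := WRR_nonneg G m
    have hNp : (0:ℝ) ≤ N ^ (m + 1) := by positivity
    have hmR : (1:ℝ) ≤ (m:ℝ) := by exact_mod_cast hm1
    have hsq : (d ^ m * N ^ (m+1)) ^ 2 -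
        2 * (d ^ m * N ^ (m+1)) * (((m:ℝ) - 1) * κ * N ^ (m+1)) ≤ (WRR G m) ^ 2 := by
      apply sqlb
      · positivity
      · have : (0:ℝ) ≤ (m:ℝ) - 1 := by linarith
        positivity
      · exact hWm0
      · calc (d ^ m * N ^ (m+1)) - ((m:ℝ) - 1) * κ * N ^ (m+1)
            = (d ^ m - ((m:ℝ) - 1) * κ) * N ^ (m+1) := by ring
          _ ≤ WRR G m := hchain
    -- exponent bookkeeping
    have eN : N ^ (m+1) * N ^ (m+1) = N ^ (r+1) := by
      rw [← pow_add]; congr 1; omega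
    have eH : κ * N ^ 2 * (N ^ s) ^ 2 * N * N = κ * N ^ (r + 1) := by
      have h : N ^ 2 * (N ^ s) ^ 2 * N * N = N ^ (r + 1) := by
        rw [← pow_mul, ← pow_add, ← pow_succ, ← pow_succ]
        congr 1
        omega
      calc κ * N ^ 2 * (N ^ s) ^ 2 * N * N = κ * (N ^ 2 * (N ^ s) ^ 2 * N * N) := by ring
        _ = κ * N ^ (r + 1) := by rw [h]
    have eD : d * (d ^ m * d ^ m) = d ^ r := by
      have : d ^ r = d ^ (m + m + 1) := by congr 1; omega
      rw [this, pow_succ, pow_add]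
      ring
    have hdm1 : d ^ m ≤ 1 := pow_le_one₀ hd0 hd1
    have hdm0 : 0 ≤ d ^ m := pow_nonneg hd0 m
    have hdd : d * d ^ m ≤ 1 := by nlinarith
    -- main scaled bound
    have hmain : (d ^ r - ((r:ℝ) - 2) * κ) * N ^ (r + 1) ≤ (closedWalkCount G r : ℝ) * N := by
      have hstep1 : d * (WRR G m) ^ 2 ≤
          (closedWalkCount G r : ℝ) * N + κ * N ^ (r + 1) := by
        have h1 : d * (WRR G m) ^ 2 ≤ d * (N * ∑ z, (FR G m z) ^ 2) :=
          mul_le_mul_of_nonneg_left hcheb hd0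
        have h2 : d * (∑ z, (FR G m z) ^ 2) ≤
            (closedWalkCount G r : ℝ) + (κ * N ^ 2) * (N ^ s) ^ 2 * N := by linarith
        have h3 := mul_le_mul_of_nonneg_left h2 (le_of_lt hN0)
        calc d * (WRR G m) ^ 2 ≤ d * (N * ∑ z, (FR G m z) ^ 2) := h1
          _ = N * (d * ∑ z, (FR G m z) ^ 2) := by ring
          _ ≤ N * ((closedWalkCount G r : ℝ) + (κ * N ^ 2) * (N ^ s) ^ 2 * N) := h3
          _ = (closedWalkCount G r : ℝ) * N + κ * N ^ 2 * (N ^ s) ^ 2 * N * N := by ring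
          _ = (closedWalkCount G r : ℝ) * N + κ * N ^ (r + 1) := by rw [eH]
      have hstep2 : d ^ r * N ^ (r+1) -
          2 * (d * d ^ m) * ((m:ℝ) - 1) * κ * N ^ (r + 1) ≤ d * (WRR G m) ^ 2 := by
        have := mul_le_mul_of_nonneg_left hsq hd0
        calc d ^ r * N ^ (r+1) - 2 * (d * d ^ m) * ((m:ℝ) - 1) * κ * N ^ (r + 1)
            = d * ((d ^ m * N ^ (m+1)) ^ 2 -
                2 * (d ^ m * N ^ (m+1)) * (((m:ℝ) - 1) * κ * N ^ (m+1))) := by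
              rw [← eD, ← eN]
              ring
          _ ≤ d * (WRR G m) ^ 2 := this
      have hcoef : 2 * (d * d ^ m) * ((m:ℝ) - 1) * κ + κ ≤ ((r:ℝ) - 2) * κ := by
        have hr2 : ((r:ℝ) - 2) = 2 * ((m:ℝ) - 1) + 1 := by
          have : (r:ℝ) = 2 * (m:ℝ) + 1 := by rw [hm]; push_cast; ring
          linarith
        rw [hr2]
        have := mul_le_mul_of_nonneg_right hdd (by linarith : (0:ℝ) ≤ (m:ℝ) - 1)
        nlinarith
      have hNr1 : (0:ℝ) ≤ N ^ (r+1) := by positivity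
      nlinarith [mul_le_mul_of_nonneg_right hcoef hNr1]
    -- numeric bound on κ
    have hκε : ((r:ℝ) - 2) * κ ≤ ε := by
      have hlogd : 1 - d ≤ -Real.log d := by
        have := Real.log_le_sub_one_of_pos hd_pos
        linarith
      have hlogr : (r:ℝ) * (-Real.log d) ≤ -Real.log ε := by
        have h1 : Real.log ε < Real.log (d ^ r) := Real.log_lt_log hε hεd
        rw [Real.log_pow] at h1
        push_cast at h1
        linarith
      have hlogε0 : 0 ≤ -Real.log ε := by
        have := Real.log_neg hε hε1
        linarith
      have hεlog : ε * (-Real.log ε) ≤ 1 / Real.exp 1 := by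
        have hepos : (0:ℝ) < Real.exp 1 := Real.exp_pos 1
        have h2 := Real.log_le_sub_one_of_pos
          (x := 1 / (Real.exp 1 * ε)) (by positivity)
        rw [one_div, Real.log_inv, Real.log_mul (by positivity) (ne_of_gt hε),
          Real.log_exp] at h2
        -- h2 : -(1 + log ε) ≤ (e ε)⁻¹ - 1, so -log ε ≤ (e ε)⁻¹
        have h3 : -Real.log ε ≤ (Real.exp 1 * ε)⁻¹ := by linarith
        have h4 := mul_le_mul_of_nonneg_left h3 (le_of_lt hε)
        calc ε * (-Real.log ε) ≤ ε * (Real.exp 1 * ε)⁻¹ := h4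
          _ = 1 / Real.exp 1 := by
            rw [mul_comm (Real.exp 1) ε, mul_inv, ← mul_assoc,
              mul_inv_cancel₀ (ne_of_gt hε), one_mul, one_div]
      have hb0 : 0 ≤ ε ^ 2 + 3 * ε / N := by positivity
      have h3N : 3 * ε / N ≤ (3/2) * ε * (ε - ε ^ 2) := by
        rw [div_le_iff₀ hN0]
        nlinarith [mul_le_mul_of_nonneg_left h2N (le_of_lt hε)]
      have hb1 : ε ^ 2 + 3 * ε / N ≤ (5/2) * ε ^ 2 := by nlinarith [h3N, hε, sq_nonneg ε]
      have hr0 : (0:ℝ) ≤ (r:ℝ) := Nat.cast_nonneg r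
      have hrd : (r:ℝ) * (1 - d) ≤ -Real.log ε :=
        le_trans (mul_le_mul_of_nonneg_left hlogd hr0) hlogr
      have hrd0 : 0 ≤ (r:ℝ) * (1 - d) := mul_nonneg hr0 (by linarith)
      have hstep : ((r:ℝ) - 2) * κ ≤ ((r:ℝ) * (1 - d)) * ((5/2) * ε ^ 2) := by
        rw [hκdef]
        have hA : ((r:ℝ) - 2) * ((1 - d) * (ε ^ 2 + 3 * ε / N)) ≤
            (r:ℝ) * ((1 - d) * (ε ^ 2 + 3 * ε / N)) := by
          apply mul_le_mul_of_nonneg_right (by linarith)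
          exact mul_nonneg (by linarith) hb0
        have hB : (r:ℝ) * ((1 - d) * (ε ^ 2 + 3 * ε / N)) ≤
            (r:ℝ) * ((1 - d) * ((5/2) * ε ^ 2)) := by
          apply mul_le_mul_of_nonneg_left _ hr0
          exact mul_le_mul_of_nonneg_left hb1 (by linarith)
        calc ((r:ℝ) - 2) * ((1 - d) * (ε ^ 2 + 3 * ε / N)) ≤
            (r:ℝ) * ((1 - d) * (ε ^ 2 + 3 * ε / N)) := hA
          _ ≤ (r:ℝ) * ((1 - d) * ((5/2) * ε ^ 2)) := hB
          _ = ((r:ℝ) * (1 - d)) * ((5/2) * ε ^ 2) := by ring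
      have hstep2 : ((r:ℝ) * (1 - d)) * ((5/2) * ε ^ 2) ≤
          (-Real.log ε) * ((5/2) * ε ^ 2) := by
        apply mul_le_mul_of_nonneg_right hrd
        positivity
      have hstep3 : (-Real.log ε) * ((5/2) * ε ^ 2) = (5/2) * ε * (ε * (-Real.log ε)) := by
        ring
      have hstep4 : (5/2) * ε * (ε * (-Real.log ε)) ≤ (5/2) * ε * (1 / Real.exp 1) := by
        apply mul_le_mul_of_nonneg_left hεlog
        positivity
      have hstep5 : (5/2) * ε * (1 / Real.exp 1) ≤ ε := by
        have he : (2.7182818283 : ℝ) < Real.exp 1 := Real.exp_one_gt_d9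
        have hepos : (0:ℝ) < Real.exp 1 := Real.exp_pos 1
        rw [one_div]
        have hinv : (Real.exp 1)⁻¹ ≤ 2/5 := by
          rw [inv_le_comm₀ hepos (by norm_num)]
          linarith
        calc (5/2) * ε * (Real.exp 1)⁻¹ ≤ (5/2) * ε * (2/5) :=
            mul_le_mul_of_nonneg_left hinv (by positivity)
          _ = ε := by ring
      linarith [hstep, hstep2, hstep4, hstep5, hstep3.le, hstep3.ge]
    -- conclude
    have hfinal : (d ^ r - ε) * N ^ (r+1) ≤ (closedWalkCount G r : ℝ) * N := by
      have h5 : (d ^ r - ε) * N ^ (r+1) ≤ (d ^ r - ((r:ℝ) - 2) * κ) * N ^ (r+1) := by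
        apply mul_le_mul_of_nonneg_right _ (by positivity)
        linarith
      linarith [hmain]
    have hNr : N ^ (r + 1) = N ^ r * N := by rw [pow_succ]
    rw [hNr] at hfinal
    have := le_of_mul_le_mul_right (by linarith [hfinal] :
      (d ^ r - ε) * N ^ r * N ≤ (closedWalkCount G r : ℝ) * N) hN0
    exact this

end P8
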